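/- Let (S, 𝒮) and (T, 𝒯) be measurable spaces, let U and V be random elements of S and T defined on a common probability space, and let H : S × T → [0, ∞] be measurable. Let δ > 0. Set β := sup_{C ∈ 𝒮⊗𝒯} |P((U,V) ∈ C) − (law(U) ⊗ law(V))(C)| (half the total variation, in total-mass normalization, between the joint law of (U,V) and the product of its marginals), and M := max( E[H(U,V)^{1+δ}], ∫_{S×T} H^{1+δ} d(law(U) ⊗ law(V)) ). If M < ∞ then |E[H(U,V)] − ∫_{S×T} H d(law(U) ⊗ law(V))| ≤ 4 · M^{1/(1+δ)} · β^{δ/(1+δ)}. -/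

import Mathlib

open MeasureTheory ENNReal Set

lemma trunc_decomp (a K : ℝ≥0∞) (hK : K ≠ ∞) : a = a ⊓ K + (a - K) := by
  rcases le_total a K with h | h
  · simp [inf_eq_left.2 h, tsub_eq_zero_of_le h]
  · rw [inf_eq_right.2 h, add_tsub_cancel_of_le h]

lemma tail_bound (a K : ℝ≥0∞) (hK0 : K ≠ 0) (hK : K ≠ ∞) {δ : ℝ} (hδ : 0 < δ) :
    a - K ≤ a ^ (1 + δ) / K ^ δ := by
  rcases le_total a K with h | h
  · simp [tsub_eq_zero_of_le h]
  rcases eq_or_ne a ∞ with rfl | ha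
  · simp [ENNReal.div_eq_top, ENNReal.rpow_ne_top_of_nonneg hδ.le hK,
      ENNReal.top_rpow_of_pos (by linarith : (0:ℝ) < 1 + δ)]
  have ha0 : a ≠ 0 := fun h0 => hK0 (le_antisymm (by simpa [h0] using h) zero_le)
  calc a - K ≤ a := tsub_le_self
    _ = a ^ (1+δ) / a ^ δ := by
        rw [← ENNReal.rpow_sub _ _ ha0 ha]; norm_num
    _ ≤ a ^ (1+δ) / K ^ δ := by
        apply ENNReal.div_le_div_left
        exact ENNReal.rpow_le_rpow h hδ.le

lemma bounded_comp {X : Type*} [MeasurableSpace X] (μ ν : Measure X)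
    (f : X → ℝ≥0∞) (hf : Measurable f) (K β : ℝ≥0∞) (hK : K ≠ ∞)
    (hfK : ∀ x, f x ≤ K)
    (hβ : ∀ C, MeasurableSet C → μ C ≤ ν C + β) :
    ∫⁻ x, f x ∂μ ≤ ∫⁻ x, f x ∂ν + K * β := by
  set g : X → ℝ := fun x => (f x).toReal with hgdef
  have hg : Measurable g := hf.ennreal_toReal
  have hfg : ∀ x, f x = ENNReal.ofReal (g x) := fun x =>
    (ENNReal.ofReal_toReal (ne_top_of_le_ne_top hK (hfK x))).symm
  have hμ : ∫⁻ x, f x ∂μ = ∫⁻ t in Ioi (0:ℝ), μ {a | t < g a} := by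
    rw [lintegral_congr hfg]
    exact lintegral_eq_lintegral_meas_lt μ (ae_of_all _ fun x => ENNReal.toReal_nonneg)
      hg.aemeasurable
  have hν : ∫⁻ x, f x ∂ν = ∫⁻ t in Ioi (0:ℝ), ν {a | t < g a} := by
    rw [lintegral_congr hfg]
    exact lintegral_eq_lintegral_meas_lt ν (ae_of_all _ fun x => ENNReal.toReal_nonneg)
      hg.aemeasurable
  rw [hμ, hν]
  calc ∫⁻ t in Ioi (0:ℝ), μ {a | t < g a}
      ≤ ∫⁻ t in Ioi (0:ℝ), (ν {a | t < g a}
          + (Ioc (0:ℝ) K.toReal).indicator (fun _ => β) t) := by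
        refine lintegral_mono_ae ((ae_restrict_iff' measurableSet_Ioi).2
          (ae_of_all _ fun t ht => ?_))
        rcases le_or_gt t K.toReal with h | h
        · have hind : (Ioc (0:ℝ) K.toReal).indicator (fun _ => β) t = β :=
            indicator_of_mem (mem_Ioc.2 ⟨ht, h⟩) _
          rw [hind]
          exact hβ _ (measurableSet_lt measurable_const hg)
        · have : {a | t < g a} = ∅ := by
            ext a
            simp only [mem_setOf_eq, mem_empty_iff_false, iff_false, not_lt]
            exact le_trans (ENNReal.toReal_mono hK (hfK a)) h.le
          simp [this]
    _ = (∫⁻ t in Ioi (0:ℝ), ν {a | t < g a}) + K * β := by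
        rw [lintegral_add_right _ (measurable_const.indicator measurableSet_Ioc),
          lintegral_indicator measurableSet_Ioc, setLIntegral_const,
          Measure.restrict_apply measurableSet_Ioc,
          inter_eq_left.2 Ioc_subset_Ioi_self, Real.volume_Ioc,
          mul_comm β]
        congr 1
        rw [ENNReal.ofReal_sub _ le_rfl]
        simp [ENNReal.ofReal_toReal hK]

/-- The β-mixing covariance-type inequality (adapted from Yoshihara): for random elements
`U`, `V` and a nonnegative measurable `H`, the expectation of `H (U, V)` differs from its
expectation under the product of the marginal laws by at most
`4 * M^(1/(1+δ)) * β^(δ/(1+δ))`, where `β` is half the total variation distance between the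
joint law and the product of the marginals and `M` bounds the `(1+δ)`-moments. -/
theorem stmt1 {Ω S T : Type*} [MeasurableSpace Ω] [MeasurableSpace S] [MeasurableSpace T]
    (P : Measure Ω) [IsProbabilityMeasure P]
    (U : Ω → S) (V : Ω → T) (hU : Measurable U) (hV : Measurable V)
    (H : S × T → ℝ≥0∞) (hH : Measurable H)
    (δ : ℝ) (hδ : 0 < δ)
    (β M : ℝ≥0∞)
    (hβ : β = ⨆ (C : Set (S × T)) (_ : MeasurableSet C),
        ((P.map (fun ω => (U ω, V ω))) C - ((P.map U).prod (P.map V)) C) ⊔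
          (((P.map U).prod (P.map V)) C - (P.map (fun ω => (U ω, V ω))) C))
    (hM : M = max (∫⁻ ω, H (U ω, V ω) ^ (1 + δ) ∂P)
        (∫⁻ x, H x ^ (1 + δ) ∂((P.map U).prod (P.map V))))
    (hMfin : M ≠ ∞) :
    |(∫⁻ ω, H (U ω, V ω) ∂P).toReal - (∫⁻ x, H x ∂((P.map U).prod (P.map V))).toReal|
      ≤ 4 * M.toReal ^ (1 / (1 + δ)) * β.toReal ^ (δ / (1 + δ)) := by
  have hUV : Measurable fun ω => (U ω, V ω) := hU.prodMk hV
  set μ : Measure (S × T) := P.map (fun ω => (U ω, V ω)) with hμdef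
  set ν : Measure (S × T) := (P.map U).prod (P.map V) with hνdef
  haveI : IsProbabilityMeasure μ := Measure.isProbabilityMeasure_map hUV.aemeasurable
  haveI : IsProbabilityMeasure (P.map U) := Measure.isProbabilityMeasure_map hU.aemeasurable
  haveI : IsProbabilityMeasure (P.map V) := Measure.isProbabilityMeasure_map hV.aemeasurable
  haveI : IsProbabilityMeasure ν := by rw [hνdef]; infer_instance
  have hmapH : ∫⁻ ω, H (U ω, V ω) ∂P = ∫⁻ x, H x ∂μ :=
    (lintegral_map hH hUV).symm
  have hmapH' : ∫⁻ ω, H (U ω, V ω) ^ (1 + δ) ∂P = ∫⁻ x, H x ^ (1 + δ) ∂μ :=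
    (lintegral_map (hH.pow_const (1 + δ)) hUV).symm
  rw [hmapH] at *
  rw [hmapH'] at hM
  set A := ∫⁻ x, H x ∂μ with hA
  set B := ∫⁻ x, H x ∂ν with hB
  -- RHS is nonnegative
  have hRHS0 : 0 ≤ 4 * M.toReal ^ (1 / (1 + δ)) * β.toReal ^ (δ / (1 + δ)) := by positivity
  -- bounds from the sup defining β
  have hβle : ∀ C : Set (S × T), MeasurableSet C → μ C ≤ ν C + β ∧ ν C ≤ μ C + β := by
    intro C hC
    have hle : (μ C - ν C) ⊔ (ν C - μ C) ≤ β := by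
      rw [hβ]
      exact le_iSup₂ (f := fun (C : Set (S × T)) (_ : MeasurableSet C) =>
        (μ C - ν C) ⊔ (ν C - μ C)) C hC
    have h1 : μ C - ν C ≤ β := le_trans le_sup_left hle
    have h2 : ν C - μ C ≤ β := le_trans le_sup_right hle
    exact ⟨tsub_le_iff_left.1 h1, tsub_le_iff_left.1 h2⟩
  have hβtop : β ≠ ∞ := by
    refine ne_top_of_le_ne_top (b := 1) one_ne_top ?_
    rw [hβ]
    refine iSup₂_le fun C hC => sup_le ?_ ?_
    · exact le_trans tsub_le_self prob_le_one
    · exact le_trans tsub_le_self prob_le_one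
  -- degenerate case β = 0
  rcases eq_or_ne β 0 with hβ0 | hβ0
  · have hμν : μ = ν := by
      ext s hs
      have h1 := (hβle s hs).1
      have h2 := (hβle s hs).2
      rw [hβ0, add_zero] at h1 h2
      exact le_antisymm h1 h2
    rw [hA, hB, hμν, sub_self, abs_zero]
    exact hRHS0
  -- degenerate case M = 0
  rcases eq_or_ne M 0 with hM0 | hM0
  · have hmax := hM.symm.trans hM0
    have hMA : ∫⁻ x, H x ^ (1 + δ) ∂μ = 0 := le_antisymm (hmax ▸ le_max_left _ _) zero_le
    have hMB : ∫⁻ x, H x ^ (1 + δ) ∂ν = 0 := le_antisymm (hmax ▸ le_max_right _ _) zero_le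
    have h1δ : (0:ℝ) < 1 + δ := by linarith
    have hzero : ∀ (ρ : Measure (S × T)), (∫⁻ x, H x ^ (1 + δ) ∂ρ = 0) →
        ∫⁻ x, H x ∂ρ = 0 := by
      intro ρ hρ
      rw [lintegral_eq_zero_iff (hH.pow_const (1 + δ))] at hρ
      rw [lintegral_eq_zero_iff hH]
      filter_upwards [hρ] with x hx
      simpa [ENNReal.rpow_eq_zero_iff, h1δ, not_lt.2 h1δ.le] using hx
    rw [hA, hB, hzero μ hMA, hzero ν hMB, sub_self, abs_zero]
    exact hRHS0
  -- main case
  set c : ℝ := 1 / (1 + δ) with hc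
  set d : ℝ := δ / (1 + δ) with hd
  have h1δ : (0:ℝ) < 1 + δ := by linarith
  have hc0 : 0 < c := by positivity
  have hd0 : 0 < d := by positivity
  have hcd : c + d = 1 := by rw [hc, hd]; field_simp
  have hcδ : c * δ = d := by rw [hc, hd]; ring
  set K : ℝ≥0∞ := (M / β) ^ c with hK
  have hMβ0 : M / β ≠ 0 := (ENNReal.div_pos hM0 hβtop).ne'
  have hMβtop : M / β ≠ ∞ := (ENNReal.div_lt_top hMfin hβ0).ne
  have hK0 : K ≠ 0 := (ENNReal.rpow_pos (ENNReal.div_pos hM0 hβtop) hMβtop).ne'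
  have hKtop : K ≠ ∞ := ENNReal.rpow_ne_top_of_nonneg hc0.le hMβtop
  set E : ℝ≥0∞ := M ^ c * β ^ d with hE
  have hMc0 : M ^ c ≠ 0 := (ENNReal.rpow_pos (pos_iff_ne_zero.2 hM0) hMfin).ne'
  have hMctop : M ^ c ≠ ∞ := ENNReal.rpow_ne_top_of_nonneg hc0.le hMfin
  have hMd0 : M ^ d ≠ 0 := (ENNReal.rpow_pos (pos_iff_ne_zero.2 hM0) hMfin).ne'
  have hMdtop : M ^ d ≠ ∞ := ENNReal.rpow_ne_top_of_nonneg hd0.le hMfin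
  have hβd0 : β ^ d ≠ 0 := (ENNReal.rpow_pos (pos_iff_ne_zero.2 hβ0) hβtop).ne'
  have hβdtop : β ^ d ≠ ∞ := ENNReal.rpow_ne_top_of_nonneg hd0.le hβtop
  have hEtop : E ≠ ∞ := ENNReal.mul_ne_top hMctop hβdtop
  -- K * β = E
  have hKβ : K * β = E := by
    rw [hK, hE, ENNReal.div_rpow_of_nonneg _ _ hc0.le]
    have hd1 : d = 1 - c := by linarith
    rw [hd1, ENNReal.rpow_sub _ _ hβ0 hβtop, ENNReal.rpow_one,
      div_eq_mul_inv, div_eq_mul_inv]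
    ring
  -- M / K ^ δ = E
  have hKδ : M / K ^ δ = E := by
    have hKδ' : K ^ δ = M ^ d / β ^ d := by
      rw [hK, ← ENNReal.rpow_mul, hcδ, ENNReal.div_rpow_of_nonneg _ _ hd0.le]
    have hMc : M ^ c = M / M ^ d := by
      have : c = 1 - d := by linarith
      rw [this, ENNReal.rpow_sub _ _ hM0 hMfin, ENNReal.rpow_one]
    rw [hKδ', hE, hMc, div_eq_mul_inv M (_ / _),
      ENNReal.inv_div (Or.inl hβdtop) (Or.inl hβd0), div_eq_mul_inv (β ^ d),
      div_eq_mul_inv M (M ^ d)]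
    ring
  -- truncation split
  have hHK : Measurable fun x => H x ⊓ K := hH.inf measurable_const
  have hsplit : ∀ (ρ : Measure (S × T)),
      ∫⁻ x, H x ∂ρ = (∫⁻ x, H x ⊓ K ∂ρ) + ∫⁻ x, H x - K ∂ρ := by
    intro ρ
    rw [← lintegral_add_left hHK]
    exact lintegral_congr fun x => trunc_decomp _ _ hKtop
  -- tail bound
  have htail : ∀ (ρ : Measure (S × T)), (∫⁻ x, H x ^ (1 + δ) ∂ρ) ≤ M →
      ∫⁻ x, H x - K ∂ρ ≤ E := by
    intro ρ hρ
    calc ∫⁻ x, H x - K ∂ρ ≤ ∫⁻ x, H x ^ (1 + δ) / K ^ δ ∂ρ :=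
          lintegral_mono fun x => tail_bound _ _ hK0 hKtop hδ
      _ = (∫⁻ x, H x ^ (1 + δ) ∂ρ) / K ^ δ := by
          simp only [div_eq_mul_inv]
          exact lintegral_mul_const _ (hH.pow_const (1 + δ))
      _ ≤ M / K ^ δ := ENNReal.div_le_div_right hρ _
      _ = E := hKδ
  have htailμ : ∫⁻ x, H x - K ∂μ ≤ E := htail μ (hM ▸ le_max_left _ _)
  have htailν : ∫⁻ x, H x - K ∂ν ≤ E := htail ν (hM ▸ le_max_right _ _)
  -- bounded part comparison
  have hbddμν : (∫⁻ x, H x ⊓ K ∂μ) ≤ (∫⁻ x, H x ⊓ K ∂ν) + K * β :=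
    bounded_comp μ ν _ hHK K β hKtop (fun x => inf_le_right)
      (fun C hC => (hβle C hC).1)
  have hbddνμ : (∫⁻ x, H x ⊓ K ∂ν) ≤ (∫⁻ x, H x ⊓ K ∂μ) + K * β :=
    bounded_comp ν μ _ hHK K β hKtop (fun x => inf_le_right)
      (fun C hC => (hβle C hC).2)
  have hbddleμ : (∫⁻ x, H x ⊓ K ∂μ) ≤ A := lintegral_mono fun x => inf_le_left
  have hbddleν : (∫⁻ x, H x ⊓ K ∂ν) ≤ B := lintegral_mono fun x => inf_le_left
  -- two-sided bound
  have hABle : A ≤ B + (E + E) := by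
    calc A = (∫⁻ x, H x ⊓ K ∂μ) + ∫⁻ x, H x - K ∂μ := hsplit μ
      _ ≤ ((∫⁻ x, H x ⊓ K ∂ν) + K * β) + E := add_le_add hbddμν htailμ
      _ ≤ (B + E) + E := by rw [hKβ]; exact add_le_add (add_le_add hbddleν le_rfl) le_rfl
      _ = B + (E + E) := by ring
  have hBAle : B ≤ A + (E + E) := by
    calc B = (∫⁻ x, H x ⊓ K ∂ν) + ∫⁻ x, H x - K ∂ν := hsplit ν
      _ ≤ ((∫⁻ x, H x ⊓ K ∂μ) + K * β) + E := add_le_add hbddνμ htailν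
      _ ≤ (A + E) + E := by rw [hKβ]; exact add_le_add (add_le_add hbddleμ le_rfl) le_rfl
      _ = A + (E + E) := by ring
  -- finiteness of A and B
  have hfin : ∀ (ρ : Measure (S × T)) [IsProbabilityMeasure ρ],
      (∫⁻ x, H x - K ∂ρ) ≤ E → (∫⁻ x, H x ∂ρ) ≠ ∞ := by
    intro ρ _ htl
    rw [hsplit ρ]
    refine ENNReal.add_ne_top.2 ⟨?_, ne_top_of_le_ne_top hEtop htl⟩
    refine ne_top_of_le_ne_top hKtop ?_
    calc (∫⁻ x, H x ⊓ K ∂ρ) ≤ ∫⁻ _, K ∂ρ := lintegral_mono fun x => inf_le_right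
      _ = K := by simp
  have hAfin : A ≠ ∞ := hfin μ htailμ
  have hBfin : B ≠ ∞ := hfin ν htailν
  -- conclude
  have hERe : E.toReal = M.toReal ^ c * β.toReal ^ d := by
    rw [hE, ENNReal.toReal_mul, ENNReal.toReal_rpow, ENNReal.toReal_rpow]
  have key : |A.toReal - B.toReal| ≤ 2 * E.toReal := by
    rw [abs_sub_le_iff]
    constructor
    · have := ENNReal.toReal_mono (by
        exact ENNReal.add_ne_top.2 ⟨hBfin, ENNReal.add_ne_top.2 ⟨hEtop, hEtop⟩⟩) hABle
      rw [ENNReal.toReal_add hBfin (ENNReal.add_ne_top.2 ⟨hEtop, hEtop⟩),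
        ENNReal.toReal_add hEtop hEtop] at this
      linarith
    · have := ENNReal.toReal_mono (by
        exact ENNReal.add_ne_top.2 ⟨hAfin, ENNReal.add_ne_top.2 ⟨hEtop, hEtop⟩⟩) hBAle
      rw [ENNReal.toReal_add hAfin (ENNReal.add_ne_top.2 ⟨hEtop, hEtop⟩),
        ENNReal.toReal_add hEtop hEtop] at this
      linarith
  refine le_trans key ?_
  rw [hERe]
  have : (0:ℝ) ≤ M.toReal ^ c * β.toReal ^ d := by positivity
  nlinarith
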